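/- Let k ≥ 3 and 2k-1 < n < 3k-2, and set V_n^(k) = W_{n-2k}^(k) W_{n-2k-1}^(k) ... W_0^(k). Then W_{n-2k+1}^(k) = V_n^(k) (n-2k+1) and W_{n-2k+2}^(k) = W_{n-2k+1}^(k) V_n^(k) (n-2k+2), where the trailing terms are single digits. -/

import Mathlib

def kbon (k : ℕ) (n : ℕ) : ℕ :=
  if _h1 : n < k - 1 then 0
  else if _h2 : n = k - 1 then 1
  else ∑ i ∈ Finset.range k, kbon k (n - i - 1)
termination_by n
decreasing_by omega

/-- The k-bonacci morphism on words over ℕ. -/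
def phiW (k : ℕ) (w : List ℕ) : List ℕ :=
  w.flatMap (fun a => if a % k = k - 1 then [a + 1] else [k * (a / k), a + 1])

/-- The finite k-bonacci word over the infinite alphabet ℕ. -/
def W (k n : ℕ) : List ℕ := (phiW k)^[n] [0]

lemma phiW_append (k : ℕ) (a b : List ℕ) : phiW k (a ++ b) = phiW k a ++ phiW k b := by
  simp [phiW]

lemma phiW_single (k a : ℕ) (h : a < k - 1) : phiW k [a] = [0, a + 1] := by
  have hk : a < k := by omega
  simp [phiW, Nat.mod_eq_of_lt hk, Nat.div_eq_of_lt hk]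
  omega

lemma phiW_W (k j : ℕ) : phiW k (W k j) = W k (j + 1) := by
  simp [W, Function.iterate_succ_apply']

lemma phiW_flatten (k : ℕ) (l : List ℕ) :
    phiW k ((l.map (W k)).flatten) = (l.map (fun j => W k (j + 1))).flatten := by
  induction l with
  | nil => simp [phiW]
  | cons a t ih => simp [phiW_append, ih, phiW_W]

lemma key (k : ℕ) (hk : 3 ≤ k) : ∀ m, m + 1 ≤ k - 1 →
    W k (m + 1) = (((List.range (m + 1)).reverse).map (W k)).flatten ++ [m + 1] := by
  intro m
  induction m with
  | zero =>
    intro _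
    have : W k 1 = phiW k (W k 0) := (phiW_W k 0).symm
    rw [this]
    have h0 : W k 0 = [0] := rfl
    rw [h0, phiW_single k 0 (by omega)]
    simp [List.range_succ, h0]
  | succ m ih =>
    intro hm
    have ihm := ih (by omega)
    have : W k (m + 2) = phiW k (W k (m + 1)) := (phiW_W k (m + 1)).symm
    rw [this, ihm, phiW_append, phiW_single k (m + 1) (by omega), phiW_flatten]
    have hr : List.range (m + 2) = 0 :: (List.range (m + 1)).map (· + 1) :=
      @List.range_succ_eq_map (m + 1)
    rw [hr]
    have h0 : W k 0 = [0] := rfl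
    simp [List.map_map, Function.comp_def, h0]

theorem V_prefix_structure (k n : ℕ) (hk : 3 ≤ k) (h1 : 2 * k - 1 < n) (h2 : n < 3 * k - 2) :
    W k (n - 2 * k + 1) = (((List.range (n + 1 - 2 * k)).reverse).map (W k)).flatten ++ [n - 2 * k + 1] ∧
    W k (n - 2 * k + 2) = W k (n - 2 * k + 1) ++
      (((List.range (n + 1 - 2 * k)).reverse).map (W k)).flatten ++ [n - 2 * k + 2] := by
  set m := n - 2 * k with hm
  have e1 : n + 1 - 2 * k = m + 1 := by omega
  have e2 : n - 2 * k + 2 = m + 2 := by omega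
  have hb1 : m + 1 ≤ k - 1 := by omega
  have hb2 : m + 1 + 1 ≤ k - 1 := by omega
  have k1 := key k hk m hb1
  have k2 := key k hk (m + 1) hb2
  rw [e1, e2]
  refine ⟨k1, ?_⟩
  rw [k2, List.range_succ]
  simp [k1]
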